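/- Let N ≥ 3, let f_1,...,f_N be commuting indeterminates with indices taken modulo N (f_0 = f_N), let β_0 = 0 and β_1,...,β_{N−1} be real constants, and let λ be a further parameter. Then for arbitrary real numbers v_1,...,v_N (indices mod N), the trace P(λ) = tr (V_N(λ + β_{N−1}) ⋯ V_2(λ + β_1) V_1(λ)) equals the Veselov–Shabat expression ∏_{n=0}^{N−1} (1 + (λ + β_n) ∂²/∂f_n ∂f_{n+1}) applied to the monomial f_1 f_2 ⋯ f_N, evaluated at f_n = v_n + v_{n+1}. -/

import Mathlib

open Polynomial in
/-- The matrix V_n(λ + b) with polynomial entries: rows (v_n, 1), (λ + b + v_n², v_n). -/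
noncomputable def polyV (w b : ℝ) : Matrix (Fin 2) (Fin 2) (Polynomial ℝ) :=
  !![C w, 1; X + C b + C (w ^ 2), C w]

/-- Partial transition matrix with polynomial entries:
`polyT v β k = V_k(λ+β_{k-1}) ⋯ V_2(λ+β_1) V_1(λ+β_0)`. -/
noncomputable def polyT (v β : ℕ → ℝ) : ℕ → Matrix (Fin 2) (Fin 2) (Polynomial ℝ)
  | 0 => 1
  | k + 1 => polyV (v (k + 1)) (β k) * polyT v β k

/-- The Veselov–Shabat operator 1 + (λ + β_n) ∂²/∂f_n ∂f_{n+1} on the polynomial ring in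
the variables f_i, i ∈ ℤ/N, over ℝ[λ]. -/
noncomputable def vsOpMod (N : ℕ) (β : ℕ → ℝ) (n : ℕ)
    (p : MvPolynomial (ZMod N) (Polynomial ℝ)) : MvPolynomial (ZMod N) (Polynomial ℝ) :=
  p + MvPolynomial.C (Polynomial.X + Polynomial.C (β n)) *
      MvPolynomial.pderiv ((n : ZMod N)) (MvPolynomial.pderiv ((n : ZMod N) + 1) p)

/-- The Veselov–Shabat expression
∏_{n=0}^{N−1} (1 + (λ + β_n) ∂²/∂f_n ∂f_{n+1}) (f_1 f_2 ⋯ f_N), indices mod N. -/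
noncomputable def vsTraceExpr (N : ℕ) (β : ℕ → ℝ) : MvPolynomial (ZMod N) (Polynomial ℝ) :=
  (List.range N).foldr (vsOpMod N β) (∏ n ∈ Finset.range N, MvPolynomial.X ((n : ZMod N)))

namespace VSaux

open MvPolynomial

lemma pderiv_pderiv_comm {σ : Type*} [DecidableEq σ] {R : Type*} [CommSemiring R]
    (i j : σ) (p : MvPolynomial σ R) :
    pderiv i (pderiv j p) = pderiv j (pderiv i p) := by
  induction p using MvPolynomial.induction_on with
  | C a => simp [pderiv_C]
  | add p q hp hq => simp [hp, hq]
  | mul_X p n ih =>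
    have e : ∀ a b : σ, pderiv a (pderiv b (p * X n)) =
        pderiv a (pderiv b p) * X n + pderiv b p * pderiv a (X n)
          + pderiv a p * pderiv b (X n) + p * pderiv a (pderiv b (X n)) := by
      intro a b
      rw [pderiv_mul, map_add, pderiv_mul, pderiv_mul]
      ring
    have h2 : ∀ a b : σ, pderiv a (pderiv b (X n : MvPolynomial σ R)) = 0 := by
      intro a b
      rcases eq_or_ne n b with rfl | hb
      · rw [pderiv_X_self]; exact pderiv_one
      · rw [pderiv_X_of_ne hb, map_zero]
    rw [e, e, ih, h2, h2]
    ring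

lemma cast_ne {N a b : ℕ} (ha : a < N) (hb : b < N) (h : a ≠ b) :
    ((a : ℕ) : ZMod N) ≠ ((b : ℕ) : ZMod N) := by
  rw [Ne, ZMod.natCast_eq_natCast_iff', Nat.mod_eq_of_lt ha, Nat.mod_eq_of_lt hb]
  exact h

lemma pderiv_prod_zero {σ : Type*} [DecidableEq σ] {R : Type*} [CommSemiring R]
    (i : σ) (s : Finset ℕ) (g : ℕ → MvPolynomial σ R)
    (h : ∀ j ∈ s, pderiv i (g j) = 0) :
    pderiv i (∏ j ∈ s, g j) = 0 := by
  refine Finset.prod_induction g (fun q => pderiv i q = 0) (fun a b ha hb => ?_)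
    (by show pderiv i (1 : MvPolynomial σ R) = 0; exact pderiv_one) h
  show pderiv i (a * b) = 0
  rw [pderiv_mul, ha, hb]; ring

/-- chain N β k = (A_{k+1}, B_{k+1}, C_{k+1}, D_{k+1}) of the open-chain expansion. -/
noncomputable def chain (N : ℕ) (β : ℕ → ℝ) : ℕ →
    (MvPolynomial (ZMod N) (Polynomial ℝ)) × (MvPolynomial (ZMod N) (Polynomial ℝ)) ×
      (MvPolynomial (ZMod N) (Polynomial ℝ)) × (MvPolynomial (ZMod N) (Polynomial ℝ))
  | 0 => (1, 0, 0, MvPolynomial.C (Polynomial.X + Polynomial.C (β 0)))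
  | k + 1 =>
      (MvPolynomial.X (((k + 1 : ℕ)) : ZMod N) * (chain N β k).1 + (chain N β k).2.2.1,
       MvPolynomial.X (((k + 1 : ℕ)) : ZMod N) * (chain N β k).2.1 + (chain N β k).2.2.2,
       MvPolynomial.C (Polynomial.X + Polynomial.C (β (k + 1))) * (chain N β k).1,
       MvPolynomial.C (Polynomial.X + Polynomial.C (β (k + 1))) * (chain N β k).2.1)

lemma chain_free (N : ℕ) (β : ℕ → ℝ) (k : ℕ) (i : ZMod N)
    (h : ∀ j : ℕ, 1 ≤ j → j ≤ k → ((j : ℕ) : ZMod N) ≠ i) :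
    pderiv i (chain N β k).1 = 0 ∧ pderiv i (chain N β k).2.1 = 0 ∧
      pderiv i (chain N β k).2.2.1 = 0 ∧ pderiv i (chain N β k).2.2.2 = 0 := by
  induction k with
  | zero => refine ⟨?_, ?_, ?_, ?_⟩ <;> simp [chain, pderiv_C, pderiv_one]
  | succ k ih =>
      obtain ⟨hA, hB, hC, hD⟩ := ih (fun j h1 h2 => h j h1 (h2.trans (Nat.le_succ k)))
      have hX : pderiv i (MvPolynomial.X (((k + 1 : ℕ)) : ZMod N) :
          MvPolynomial (ZMod N) (Polynomial ℝ)) = 0 :=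
        pderiv_X_of_ne (h (k + 1) (by omega) le_rfl)
      refine ⟨?_, ?_, ?_, ?_⟩ <;>
        · simp only [chain, map_add, pderiv_mul, pderiv_C_mul, pderiv_C, hA, hB, hC, hD, hX]
          ring

lemma vsOp_comm (N : ℕ) (β : ℕ → ℝ) (m n : ℕ) (p : MvPolynomial (ZMod N) (Polynomial ℝ)) :
    vsOpMod N β m (vsOpMod N β n p) = vsOpMod N β n (vsOpMod N β m p) := by
  unfold vsOpMod
  have key : ∀ (a b c d : ZMod N) (q : MvPolynomial (ZMod N) (Polynomial ℝ)),
      pderiv a (pderiv b (pderiv c (pderiv d q)))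
        = pderiv c (pderiv d (pderiv a (pderiv b q))) := by
    intro a b c d q
    rw [pderiv_pderiv_comm b c, pderiv_pderiv_comm a c, pderiv_pderiv_comm b d,
      pderiv_pderiv_comm a d]
  have hpull : ∀ (a b : ZMod N) (c : Polynomial ℝ) (q : MvPolynomial (ZMod N) (Polynomial ℝ)),
      pderiv a (pderiv b (MvPolynomial.C c * q)) = MvPolynomial.C c * pderiv a (pderiv b q) := by
    intro a b c q
    rw [pderiv_C_mul, pderiv_C_mul]
  have hadd : ∀ (a b : ZMod N) (q r : MvPolynomial (ZMod N) (Polynomial ℝ)),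
      pderiv a (pderiv b (q + r)) = pderiv a (pderiv b q) + pderiv a (pderiv b r) := by
    intro a b q r
    rw [map_add, map_add]
  rw [hadd, hadd, hpull, hpull,
    key ((m : ZMod N)) ((m : ZMod N) + 1) ((n : ZMod N)) ((n : ZMod N) + 1) p]
  ring

lemma foldr_vsOp_pull (N : ℕ) (β : ℕ → ℝ) (n : ℕ) (l : List ℕ)
    (p : MvPolynomial (ZMod N) (Polynomial ℝ)) :
    l.foldr (vsOpMod N β) (vsOpMod N β n p) = vsOpMod N β n (l.foldr (vsOpMod N β) p) := by
  induction l with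
  | nil => rfl
  | cons a l ih => simp only [List.foldr_cons, ih, vsOp_comm]

/-- Partial fold. -/
noncomputable def Qp (N : ℕ) (β : ℕ → ℝ) (k : ℕ) : MvPolynomial (ZMod N) (Polynomial ℝ) :=
  (List.range k).foldr (vsOpMod N β) (∏ n ∈ Finset.range N, MvPolynomial.X ((n : ZMod N)))

lemma Qp_succ (N : ℕ) (β : ℕ → ℝ) (k : ℕ) :
    Qp N β (k + 1) = vsOpMod N β k (Qp N β k) := by
  unfold Qp
  rw [List.range_succ, List.foldr_append]
  exact foldr_vsOp_pull N β k _ _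

end VSaux

open MvPolynomial VSaux in
lemma Qp_invariant (N : ℕ) (β : ℕ → ℝ) (hN : 3 ≤ N) :
    ∀ k : ℕ, k + 2 ≤ N →
      Qp N β (k + 1) =
        (MvPolynomial.X (0 : ZMod N) * MvPolynomial.X (((k + 1 : ℕ)) : ZMod N) *
            (chain N β k).1
          + MvPolynomial.X (((k + 1 : ℕ)) : ZMod N) * (chain N β k).2.1
          + MvPolynomial.X (0 : ZMod N) * (chain N β k).2.2.1
          + (chain N β k).2.2.2) *
        ∏ j ∈ Finset.Ico (k + 2) N, MvPolynomial.X ((j : ZMod N)) := by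
  intro k
  induction k with
  | zero =>
      intro hk
      have h0N : 0 < N := by omega
      have h1N : 1 < N := by omega
      have hsplit : (∏ n ∈ Finset.range N, (MvPolynomial.X ((n : ZMod N)) :
            MvPolynomial (ZMod N) (Polynomial ℝ)))
          = MvPolynomial.X ((0 : ℕ) : ZMod N) * (MvPolynomial.X ((1 : ℕ) : ZMod N) *
              ∏ j ∈ Finset.Ico 2 N, MvPolynomial.X ((j : ZMod N))) := by
        rw [Finset.range_eq_Ico, Finset.prod_eq_prod_Ico_succ_bot h0N,
          Finset.prod_eq_prod_Ico_succ_bot h1N]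
      have hR : ∀ i : ZMod N, (∀ j : ℕ, 2 ≤ j → j < N → ((j : ℕ) : ZMod N) ≠ i) →
          pderiv i (∏ j ∈ Finset.Ico 2 N, (MvPolynomial.X ((j : ZMod N)) :
            MvPolynomial (ZMod N) (Polynomial ℝ))) = 0 := by
        intro i hi
        refine pderiv_prod_zero i _ _ (fun j hj => ?_)
        rw [Finset.mem_Ico] at hj
        exact pderiv_X_of_ne (hi j hj.1 hj.2)
      have h01 : ((0 : ℕ) : ZMod N) ≠ ((1 : ℕ) : ZMod N) := cast_ne h0N h1N (by omega)
      have hQ1 : Qp N β 1 = vsOpMod N β 0 (Qp N β 0) := Qp_succ N β 0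
      rw [hQ1]
      have hQ0 : Qp N β 0 = ∏ n ∈ Finset.range N, MvPolynomial.X ((n : ZMod N)) := rfl
      rw [hQ0, hsplit]
      unfold vsOpMod
      have e1 : ((1 : ℕ) : ZMod N) = ((0 : ℕ) : ZMod N) + 1 := by push_cast; ring
      have hRd1 : pderiv (((0:ℕ) : ZMod N) + 1)
          (∏ j ∈ Finset.Ico 2 N, (MvPolynomial.X ((j : ZMod N)) :
            MvPolynomial (ZMod N) (Polynomial ℝ))) = 0 := by
        rw [← e1]
        exact hR _ (fun j hj hj' => cast_ne (by omega) h1N (by omega))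
      have hRd0 : pderiv (((0:ℕ) : ZMod N))
          (∏ j ∈ Finset.Ico 2 N, (MvPolynomial.X ((j : ZMod N)) :
            MvPolynomial (ZMod N) (Polynomial ℝ))) = 0 :=
        hR _ (fun j hj hj' => cast_ne (by omega) h0N (by omega))
      have hX0d : pderiv (((0:ℕ) : ZMod N) + 1) (MvPolynomial.X ((0:ℕ) : ZMod N) :
          MvPolynomial (ZMod N) (Polynomial ℝ)) = 0 := by
        rw [← e1]; exact pderiv_X_of_ne h01
      have hX1d : pderiv (((0:ℕ) : ZMod N) + 1) (MvPolynomial.X ((1:ℕ) : ZMod N) :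
          MvPolynomial (ZMod N) (Polynomial ℝ)) = 1 := by
        rw [← e1]; exact pderiv_X_self _
      rw [pderiv_mul, pderiv_mul, hX0d, hX1d, hRd1]
      have hX1d0 : pderiv (((0:ℕ) : ZMod N)) (MvPolynomial.X ((1:ℕ) : ZMod N) :
          MvPolynomial (ZMod N) (Polynomial ℝ)) = 0 := pderiv_X_of_ne h01.symm
      simp only [mul_zero, mul_one, zero_add, add_zero, pderiv_mul, hRd0, hX1d0,
        pderiv_X_self, zero_mul, one_mul]
      simp only [chain, Nat.cast_zero, Nat.cast_one]
      ring
  | succ k ih =>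
      intro hk
      have ihk := ih (by omega)
      have hkN : k + 1 < N := by omega
      have hk2N : k + 2 < N := by omega
      set A := (chain N β k).1 with hA
      set B := (chain N β k).2.1 with hB
      set C := (chain N β k).2.2.1 with hC
      set D := (chain N β k).2.2.2 with hD
      -- index casts
      have e2 : ((k + 1 : ℕ) : ZMod N) + 1 = ((k + 2 : ℕ) : ZMod N) := by push_cast; ring
      -- split the spectator product
      have hsplit : (∏ j ∈ Finset.Ico (k + 2) N, (MvPolynomial.X ((j : ZMod N)) :
            MvPolynomial (ZMod N) (Polynomial ℝ)))
          = MvPolynomial.X (((k + 2 : ℕ)) : ZMod N) *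
            ∏ j ∈ Finset.Ico (k + 3) N, MvPolynomial.X ((j : ZMod N)) :=
        Finset.prod_eq_prod_Ico_succ_bot hk2N _
      have hfreeK2 := chain_free N β k (((k + 2 : ℕ)) : ZMod N)
        (fun j h1 h2 => cast_ne (by omega) hk2N (by omega))
      have hfreeK1 := chain_free N β k (((k + 1 : ℕ)) : ZMod N)
        (fun j h1 h2 => cast_ne (by omega) hkN (by omega))
      have hRest : ∀ (m : ℕ), m < N → pderiv ((m : ℕ) : ZMod N)
          (∏ j ∈ Finset.Ico (k + 3) N, (MvPolynomial.X ((j : ZMod N)) :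
            MvPolynomial (ZMod N) (Polynomial ℝ))) = 0 ∨ True := fun _ _ => Or.inr trivial
      have hRd : ∀ (m : ℕ), m < N → m < k + 3 → pderiv ((m : ℕ) : ZMod N)
          (∏ j ∈ Finset.Ico (k + 3) N, (MvPolynomial.X ((j : ZMod N)) :
            MvPolynomial (ZMod N) (Polynomial ℝ))) = 0 := by
        intro m hm hm3
        refine pderiv_prod_zero _ _ _ (fun j hj => ?_)
        rw [Finset.mem_Ico] at hj
        exact pderiv_X_of_ne (cast_ne (by omega) hm (by omega))
      have hX0K2 : pderiv (((k + 2 : ℕ)) : ZMod N) (MvPolynomial.X ((0 : ZMod N)) :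
          MvPolynomial (ZMod N) (Polynomial ℝ)) = 0 := by
        have : ((0 : ℕ) : ZMod N) = (0 : ZMod N) := by push_cast; ring
        rw [← this]; exact pderiv_X_of_ne (cast_ne (by omega) hk2N (by omega))
      have hX0K1 : pderiv (((k + 1 : ℕ)) : ZMod N) (MvPolynomial.X ((0 : ZMod N)) :
          MvPolynomial (ZMod N) (Polynomial ℝ)) = 0 := by
        have : ((0 : ℕ) : ZMod N) = (0 : ZMod N) := by push_cast; ring
        rw [← this]; exact pderiv_X_of_ne (cast_ne (by omega) hkN (by omega))
      have hXK1K2 : pderiv (((k + 2 : ℕ)) : ZMod N) (MvPolynomial.X (((k + 1 : ℕ)) : ZMod N) :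
          MvPolynomial (ZMod N) (Polynomial ℝ)) = 0 :=
        pderiv_X_of_ne (cast_ne hkN hk2N (by omega))
      obtain ⟨hA2, hB2, hC2, hD2⟩ := hfreeK2
      obtain ⟨hA1, hB1, hC1, hD1⟩ := hfreeK1
      rw [Qp_succ, ihk, hsplit]
      unfold vsOpMod
      rw [e2]
      -- inner derivative
      have hBig2 : pderiv (((k + 2 : ℕ)) : ZMod N)
          ((MvPolynomial.X (0 : ZMod N) * MvPolynomial.X (((k + 1 : ℕ)) : ZMod N) * A
            + MvPolynomial.X (((k + 1 : ℕ)) : ZMod N) * B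
            + MvPolynomial.X (0 : ZMod N) * C + D)) = 0 := by
        simp only [hA, hB, hC, hD, map_add, pderiv_mul, hA2, hB2, hC2, hD2, hX0K2, hXK1K2]
        ring
      have hinner : pderiv (((k + 2 : ℕ)) : ZMod N)
          ((MvPolynomial.X (0 : ZMod N) * MvPolynomial.X (((k + 1 : ℕ)) : ZMod N) * A
            + MvPolynomial.X (((k + 1 : ℕ)) : ZMod N) * B
            + MvPolynomial.X (0 : ZMod N) * C + D) *
            (MvPolynomial.X (((k + 2 : ℕ)) : ZMod N) *
              ∏ j ∈ Finset.Ico (k + 3) N, MvPolynomial.X ((j : ZMod N)))) =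
          (MvPolynomial.X (0 : ZMod N) * MvPolynomial.X (((k + 1 : ℕ)) : ZMod N) * A
            + MvPolynomial.X (((k + 1 : ℕ)) : ZMod N) * B
            + MvPolynomial.X (0 : ZMod N) * C + D) *
            ∏ j ∈ Finset.Ico (k + 3) N, MvPolynomial.X ((j : ZMod N)) := by
        rw [pderiv_mul, hBig2, pderiv_mul, pderiv_X_self, hRd (k + 2) hk2N (by omega)]
        ring
      rw [hinner]
      have houter : pderiv (((k + 1 : ℕ)) : ZMod N)
          ((MvPolynomial.X (0 : ZMod N) * MvPolynomial.X (((k + 1 : ℕ)) : ZMod N) * A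
            + MvPolynomial.X (((k + 1 : ℕ)) : ZMod N) * B
            + MvPolynomial.X (0 : ZMod N) * C + D) *
            ∏ j ∈ Finset.Ico (k + 3) N, MvPolynomial.X ((j : ZMod N))) =
          (MvPolynomial.X (0 : ZMod N) * A + B) *
            ∏ j ∈ Finset.Ico (k + 3) N, MvPolynomial.X ((j : ZMod N)) := by
        rw [pderiv_mul, hRd (k + 1) hkN (by omega)]
        simp only [hA, hB, hC, hD, pderiv_mul, map_add, pderiv_mul, hA1, hB1, hC1, hD1, hX0K1,
          pderiv_X_self]
        ring
      rw [houter]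
      show _ = (_ + _ + _ + _) * _
      simp only [chain]
      rw [← hA, ← hB, ← hC, ← hD]
      ring

namespace VSaux

open MvPolynomial

/-- Evaluation at f_i = v_i + v_{i+1}. -/
noncomputable def ev (N : ℕ) (v : ZMod N → ℝ) (p : MvPolynomial (ZMod N) (Polynomial ℝ)) :
    Polynomial ℝ :=
  MvPolynomial.eval (fun i : ZMod N => Polynomial.C (v i + v (i + 1))) p

@[simp] lemma ev_add (N : ℕ) (v : ZMod N → ℝ) (p q : MvPolynomial (ZMod N) (Polynomial ℝ)) :
    ev N v (p + q) = ev N v p + ev N v q := map_add _ _ _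

@[simp] lemma ev_mul (N : ℕ) (v : ZMod N → ℝ) (p q : MvPolynomial (ZMod N) (Polynomial ℝ)) :
    ev N v (p * q) = ev N v p * ev N v q := map_mul _ _ _

@[simp] lemma ev_one (N : ℕ) (v : ZMod N → ℝ) : ev N v 1 = 1 := map_one _

@[simp] lemma ev_zero (N : ℕ) (v : ZMod N → ℝ) : ev N v 0 = 0 := map_zero _

@[simp] lemma ev_C (N : ℕ) (v : ZMod N → ℝ) (p : Polynomial ℝ) :
    ev N v (MvPolynomial.C p) = p := MvPolynomial.eval_C _

lemma ev_X (N : ℕ) (v : ZMod N → ℝ) (m : ℕ) :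
    ev N v (MvPolynomial.X ((m : ℕ) : ZMod N)) =
      Polynomial.C (v ((m : ℕ) : ZMod N)) + Polynomial.C (v (((m + 1 : ℕ)) : ZMod N)) := by
  unfold ev
  rw [MvPolynomial.eval_X,
    show (((m : ℕ)) : ZMod N) + 1 = (((m + 1 : ℕ)) : ZMod N) by push_cast; ring, map_add]

lemma ev_X0 (N : ℕ) (v : ZMod N → ℝ) :
    ev N v (MvPolynomial.X (0 : ZMod N)) = Polynomial.C (v 0) + Polynomial.C (v 1) := by
  unfold ev
  rw [MvPolynomial.eval_X, zero_add, map_add]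

end VSaux

open MvPolynomial Polynomial VSaux in
lemma polyT_entries (N : ℕ) (β : ℕ → ℝ) (v : ZMod N → ℝ) (k : ℕ) :
    polyT (fun n => v ((n : ZMod N))) β (k + 1) =
      !![ev N v (chain N β k).1 * Polynomial.C (v ((1 : ℕ) : ZMod N)) + ev N v (chain N β k).2.1,
         ev N v (chain N β k).1;
         ev N v (chain N β k).1 * Polynomial.C (v ((k + 1 : ℕ) : ZMod N)) *
             Polynomial.C (v ((1 : ℕ) : ZMod N))
           + ev N v (chain N β k).2.1 * Polynomial.C (v ((k + 1 : ℕ) : ZMod N))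
           + ev N v (chain N β k).2.2.1 * Polynomial.C (v ((1 : ℕ) : ZMod N))
           + ev N v (chain N β k).2.2.2,
         ev N v (chain N β k).1 * Polynomial.C (v ((k + 1 : ℕ) : ZMod N))
           + ev N v (chain N β k).2.2.1] := by
  induction k with
  | zero =>
      show polyV (v ((1 : ℕ) : ZMod N)) (β 0) * polyT _ β 0 = _
      show polyV (v ((1 : ℕ) : ZMod N)) (β 0) * 1 = _
      rw [mul_one]
      simp only [chain, ev_one, ev_zero, ev_C]
      unfold polyV
      refine Matrix.ext fun i j => ?_
      fin_cases i <;> fin_cases j <;>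
        simp only [Matrix.cons_val_zero, Matrix.cons_val_one, Matrix.head_cons,
          Matrix.head_fin_const, Matrix.cons_val', Matrix.empty_val',
          Matrix.cons_val_fin_one, map_pow, map_add, map_mul] <;>
        ring
  | succ k ih =>
      show polyV (v ((k + 2 : ℕ) : ZMod N)) (β (k + 1)) * polyT _ β (k + 1) = _
      rw [ih]
      have hXev : ev N v (MvPolynomial.X (((k + 1 : ℕ)) : ZMod N))
          = Polynomial.C (v ((k + 1 : ℕ) : ZMod N)) + Polynomial.C (v ((k + 2 : ℕ) : ZMod N)) :=
        ev_X N v (k + 1)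
      have hcA : ev N v (chain N β (k + 1)).1
          = (Polynomial.C (v ((k + 1 : ℕ) : ZMod N)) + Polynomial.C (v ((k + 2 : ℕ) : ZMod N)))
            * ev N v (chain N β k).1 + ev N v (chain N β k).2.2.1 := by
        simp only [chain, ev_add, ev_mul, hXev]
      have hcB : ev N v (chain N β (k + 1)).2.1
          = (Polynomial.C (v ((k + 1 : ℕ) : ZMod N)) + Polynomial.C (v ((k + 2 : ℕ) : ZMod N)))
            * ev N v (chain N β k).2.1 + ev N v (chain N β k).2.2.2 := by
        simp only [chain, ev_add, ev_mul, hXev]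
      have hcC : ev N v (chain N β (k + 1)).2.2.1
          = (Polynomial.X + Polynomial.C (β (k + 1))) * ev N v (chain N β k).1 := by
        simp only [chain, ev_mul, ev_C]
      have hcD : ev N v (chain N β (k + 1)).2.2.2
          = (Polynomial.X + Polynomial.C (β (k + 1))) * ev N v (chain N β k).2.1 := by
        simp only [chain, ev_mul, ev_C]
      rw [hcA, hcB, hcC, hcD]
      unfold polyV
      rw [Matrix.mul_fin_two]
      refine Matrix.ext fun i j => ?_
      fin_cases i <;> fin_cases j <;>
        simp only [Matrix.cons_val_zero, Matrix.cons_val_one, Matrix.head_cons,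
          Matrix.head_fin_const, Matrix.cons_val', Matrix.empty_val',
          Matrix.cons_val_fin_one, map_pow, map_add, map_mul] <;>
        ring

/-- the Veselov–Shabat trace formula: P(λ) = tr(V_N(λ+β_{N−1}) ⋯ V_1(λ))
equals ∏_{n=0}^{N−1}(1 + (λ+β_n) ∂²/∂f_n ∂f_{n+1})(f_1 ⋯ f_N) evaluated at
f_n = v_n + v_{n+1}. -/
theorem veselov_shabat_trace_formula (N : ℕ) (hN : 3 ≤ N) (β : ℕ → ℝ) (hβ0 : β 0 = 0)
    (v : ZMod N → ℝ) :
    Matrix.trace (polyT (fun n => v ((n : ZMod N))) β N)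
      = MvPolynomial.eval (fun i : ZMod N => Polynomial.C (v i + v (i + 1)))
          (vsTraceExpr N β) := by
  open MvPolynomial VSaux in
  obtain ⟨M, rfl⟩ : ∃ M, N = M + 3 := ⟨N - 3, by omega⟩
  show Matrix.trace (polyT (fun n => v ((n : ZMod (M + 3)))) β (M + 2 + 1)) = _
  rw [polyT_entries (M + 3) β v (M + 2), Matrix.trace_fin_two_of]
  -- unfold chain at M + 2
  have hAe : ev (M + 3) v (chain (M + 3) β (M + 2)).1
      = ev (M + 3) v (MvPolynomial.X (((M + 2 : ℕ)) : ZMod (M + 3)))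
          * ev (M + 3) v (chain (M + 3) β (M + 1)).1
        + ev (M + 3) v (chain (M + 3) β (M + 1)).2.2.1 := by
    show ev (M + 3) v (chain (M + 3) β (M + 1 + 1)).1 = _
    simp only [chain, ev_add, ev_mul]
  have hBe : ev (M + 3) v (chain (M + 3) β (M + 2)).2.1
      = ev (M + 3) v (MvPolynomial.X (((M + 2 : ℕ)) : ZMod (M + 3)))
          * ev (M + 3) v (chain (M + 3) β (M + 1)).2.1
        + ev (M + 3) v (chain (M + 3) β (M + 1)).2.2.2 := by
    show ev (M + 3) v (chain (M + 3) β (M + 1 + 1)).2.1 = _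
    simp only [chain, ev_add, ev_mul]
  have hCe : ev (M + 3) v (chain (M + 3) β (M + 2)).2.2.1
      = (Polynomial.X + Polynomial.C (β (M + 2))) * ev (M + 3) v (chain (M + 3) β (M + 1)).1 := by
    show ev (M + 3) v (chain (M + 3) β (M + 1 + 1)).2.2.1 = _
    simp only [chain, ev_mul, ev_C]
  -- RHS : reduce the fold
  have hinv : Qp (M + 3) β (M + 2) =
      (MvPolynomial.X (0 : ZMod (M + 3)) * MvPolynomial.X (((M + 2 : ℕ)) : ZMod (M + 3)) *
          (chain (M + 3) β (M + 1)).1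
        + MvPolynomial.X (((M + 2 : ℕ)) : ZMod (M + 3)) * (chain (M + 3) β (M + 1)).2.1
        + MvPolynomial.X (0 : ZMod (M + 3)) * (chain (M + 3) β (M + 1)).2.2.1
        + (chain (M + 3) β (M + 1)).2.2.2) *
        ∏ j ∈ Finset.Ico (M + 3) (M + 3), MvPolynomial.X ((j : ZMod (M + 3))) :=
    Qp_invariant (M + 3) β (by omega) (M + 1) (by omega)
  rw [Finset.Ico_self, Finset.prod_empty, mul_one] at hinv
  have hsucc : vsTraceExpr (M + 3) β
      = vsOpMod (M + 3) β (M + 2) (Qp (M + 3) β (M + 2)) := Qp_succ (M + 3) β (M + 2)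
  rw [hsucc, hinv]
  -- compute the second derivative
  set A := (chain (M + 3) β (M + 1)).1 with hA
  set B := (chain (M + 3) β (M + 1)).2.1 with hB
  set C := (chain (M + 3) β (M + 1)).2.2.1 with hC
  set D := (chain (M + 3) β (M + 1)).2.2.2 with hD
  have hM2N : M + 2 < M + 3 := by omega
  have h0N : 0 < M + 3 := by omega
  obtain ⟨hA0, hB0, hC0, hD0⟩ := chain_free (M + 3) β (M + 1) (0 : ZMod (M + 3))
    (fun j h1 h2 => by
      simpa using cast_ne (N := M + 3) (show j < M + 3 by omega) h0N (by omega))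
  obtain ⟨hA2, hB2, hC2, hD2⟩ := chain_free (M + 3) β (M + 1) (((M + 2 : ℕ)) : ZMod (M + 3))
    (fun j h1 h2 => cast_ne (show j < M + 3 by omega) hM2N (by omega))
  have hX20 : pderiv (0 : ZMod (M + 3)) (MvPolynomial.X (((M + 2 : ℕ)) : ZMod (M + 3)) :
      MvPolynomial (ZMod (M + 3)) (Polynomial ℝ)) = 0 := by
    refine pderiv_X_of_ne ?_
    simpa using cast_ne hM2N h0N (by omega)
  have hX02 : pderiv (((M + 2 : ℕ)) : ZMod (M + 3)) (MvPolynomial.X (0 : ZMod (M + 3)) :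
      MvPolynomial (ZMod (M + 3)) (Polynomial ℝ)) = 0 := by
    refine pderiv_X_of_ne ?_
    simpa using cast_ne h0N hM2N (by omega)
  unfold vsOpMod
  have e0 : (((M + 2 : ℕ)) : ZMod (M + 3)) + 1 = 0 := by
    rw [show (((M + 2 : ℕ)) : ZMod (M + 3)) + 1 = (((M + 3 : ℕ)) : ZMod (M + 3)) by
      push_cast; ring]
    exact ZMod.natCast_self (M + 3)
  rw [e0]
  have hd0 : pderiv (0 : ZMod (M + 3))
      (MvPolynomial.X (0 : ZMod (M + 3)) * MvPolynomial.X (((M + 2 : ℕ)) : ZMod (M + 3)) * A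
        + MvPolynomial.X (((M + 2 : ℕ)) : ZMod (M + 3)) * B
        + MvPolynomial.X (0 : ZMod (M + 3)) * C + D)
      = MvPolynomial.X (((M + 2 : ℕ)) : ZMod (M + 3)) * A + C := by
    simp only [hA, hB, hC, hD, map_add, pderiv_mul, hA0, hB0, hC0, hD0, hX20, pderiv_X_self]
    ring
  rw [hd0]
  have hd2 : pderiv (((M + 2 : ℕ)) : ZMod (M + 3))
      (MvPolynomial.X (((M + 2 : ℕ)) : ZMod (M + 3)) * A + C) = A := by
    simp only [hA, hC, map_add, pderiv_mul, hA2, hC2, pderiv_X_self]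
    ring
  rw [hd2]
  -- now everything is an `ev`
  show _ = ev (M + 3) v _
  simp only [ev_add, ev_mul, ev_C]
  rw [hAe, hBe, hCe]
  rw [ev_X (M + 3) v (M + 2), ev_X0 (M + 3) v]
  rw [show (((M + 2 + 1 : ℕ)) : ZMod (M + 3)) = 0 from ZMod.natCast_self (M + 3)]
  rw [show ((1 : ℕ) : ZMod (M + 3)) = 1 from Nat.cast_one]
  ring
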